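/- For j = 1,2, let u_j : ℝ → ℝ be bounded, locally absolutely continuous with derivative u_j' ∈ L²(ℝ), and let μ_j be a nonnegative finite Borel measure on ℝ whose absolutely continuous part with respect to Lebesgue measure has density (u_j')². Assume C := μ₁(ℝ) = μ₂(ℝ) > 0, and define χ_j(η) = sup{x ∈ ℝ : μ_j((−∞,x)) < η} for η ∈ (0,C). If χ₁(η) = χ₂(η) and u₁(χ₁(η)) = u₂(χ₂(η)) for every η ∈ (0,C), then μ₁ = μ₂ and u₁ = u₂. -/

import Mathlib

open MeasureTheory Set Filter Topology

namespace EulerianAux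

variable (μ : Measure ℝ) [IsFiniteMeasure μ]

lemma F_mono : Monotone (fun x => (μ (Iio x)).toReal) := fun _ _ hab =>
  ENNReal.toReal_mono (measure_ne_top μ _) (measure_mono (Iio_subset_Iio hab))

lemma F_le_univ (x : ℝ) : (μ (Iio x)).toReal ≤ (μ univ).toReal :=
  ENNReal.toReal_mono (measure_ne_top μ _) (measure_mono (subset_univ _))

lemma exists_F_lt {η : ℝ} (hη : 0 < η) : ∃ x : ℝ, (μ (Iio x)).toReal < η := by
  have hI : ⋂ n : ℕ, Iio (-(n : ℝ)) = ∅ := by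
    ext y
    simp only [mem_iInter, mem_Iio, mem_empty_iff_false, iff_false]
    push_neg
    obtain ⟨n, hn⟩ := exists_nat_gt (-y)
    exact ⟨n, by linarith⟩
  have h1 : Tendsto (fun n : ℕ => μ (Iio (-(n : ℝ)))) atTop (𝓝 0) := by
    have := tendsto_measure_iInter_atTop (μ := μ) (s := fun n : ℕ => Iio (-(n : ℝ)))
      (fun _ => measurableSet_Iio.nullMeasurableSet)
      (fun m n hmn => Iio_subset_Iio (by exact neg_le_neg (Nat.cast_le.mpr hmn)))
      ⟨0, measure_ne_top μ _⟩
    rwa [hI, measure_empty] at this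
  have h2 : Tendsto (fun n : ℕ => (μ (Iio (-(n : ℝ)))).toReal) atTop (𝓝 0) := by
    have h3 := (ENNReal.tendsto_toReal (show (0 : ENNReal) ≠ ⊤ by simp)).comp h1
    simpa [Function.comp_def] using h3
  obtain ⟨n, hn⟩ := (h2.eventually_lt_const hη).exists
  exact ⟨-(n : ℝ), hn⟩

lemma exists_lt_F {η : ℝ} (hη : η < (μ univ).toReal) : ∃ x : ℝ, η < (μ (Iio x)).toReal := by
  have h1 : Tendsto (fun x : ℝ => (μ (Iic x)).toReal) atTop (𝓝 (μ univ).toReal) :=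
    (ENNReal.tendsto_toReal (measure_ne_top μ _)).comp (tendsto_measure_Iic_atTop μ)
  obtain ⟨x, hx⟩ := (h1.eventually_const_lt hη).exists
  refine ⟨x + 1, lt_of_lt_of_le hx ?_⟩
  exact ENNReal.toReal_mono (measure_ne_top μ _)
    (measure_mono (fun y hy => lt_of_le_of_lt hy (lt_add_one x)))

lemma bddAbove_S {η : ℝ} (hη : η < (μ univ).toReal) :
    BddAbove {x : ℝ | (μ (Iio x)).toReal < η} := by
  obtain ⟨z, hz⟩ := exists_lt_F μ hη
  refine ⟨z, fun x hx => ?_⟩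
  by_contra h
  push_neg at h
  have := F_mono μ h.le
  simp only [mem_setOf_eq] at hx this
  linarith

lemma le_chi {η x : ℝ} (hη : η < (μ univ).toReal) (hx : (μ (Iio x)).toReal < η) :
    x ≤ sSup {x : ℝ | (μ (Iio x)).toReal < η} :=
  le_csSup (bddAbove_S μ hη) hx

lemma F_lt_of_lt_chi {η y : ℝ} (hη0 : 0 < η)
    (hy : y < sSup {x : ℝ | (μ (Iio x)).toReal < η}) : (μ (Iio y)).toReal < η := by
  obtain ⟨z, hz, hyz⟩ := exists_lt_of_lt_csSup (exists_F_lt μ hη0) hy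
  exact lt_of_le_of_lt (F_mono μ hyz.le) hz

lemma F_le_of_forall_lt {x η : ℝ} (h : ∀ y < x, (μ (Iio y)).toReal < η) :
    (μ (Iio x)).toReal ≤ η := by
  have hcover : ⋃ n : ℕ, Iio (x - 1 / ((n : ℝ) + 1)) = Iio x := by
    ext y
    simp only [mem_iUnion, mem_Iio]
    constructor
    · rintro ⟨n, hn⟩
      have : (0 : ℝ) < 1 / ((n : ℝ) + 1) := by positivity
      linarith
    · intro hy
      obtain ⟨n, hn⟩ := exists_nat_one_div_lt (show (0 : ℝ) < x - y by linarith)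
      exact ⟨n, by linarith⟩
  have hmono : Monotone (fun n : ℕ => Iio (x - 1 / ((n : ℝ) + 1))) := by
    intro m n hmn
    apply Iio_subset_Iio
    have h1 : (1 : ℝ) / ((n : ℝ) + 1) ≤ 1 / ((m : ℝ) + 1) := by
      apply one_div_le_one_div_of_le (by positivity)
      exact_mod_cast Nat.add_le_add_right hmn 1
    linarith
  have h1 : Tendsto (fun n : ℕ => μ (Iio (x - 1 / ((n : ℝ) + 1)))) atTop (𝓝 (μ (Iio x))) := by
    have := tendsto_measure_iUnion_atTop (μ := μ) hmono
    rwa [hcover] at this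
  have h2 : Tendsto (fun n : ℕ => (μ (Iio (x - 1 / ((n : ℝ) + 1)))).toReal) atTop
      (𝓝 (μ (Iio x)).toReal) :=
    (ENNReal.tendsto_toReal (measure_ne_top μ _)).comp h1
  refine le_of_tendsto h2 (Eventually.of_forall fun n => ?_)
  refine (h _ ?_).le
  have : (0 : ℝ) < 1 / ((n : ℝ) + 1) := by positivity
  linarith

lemma g_ae_zero (g : ℝ → ℝ) (hg : AEMeasurable g (volume : Measure ℝ))
    (hac : μ.rnDeriv volume =ᵐ[volume] fun x => ENNReal.ofReal ((g x) ^ 2))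
    {A : Set ℝ} (hA : MeasurableSet A) (hA0 : μ A = 0) :
    ∀ᵐ y ∂((volume : Measure ℝ).restrict A), g y = 0 := by
  have h1 : ∫⁻ y in A, ENNReal.ofReal ((g y) ^ 2) ∂volume = 0 := by
    have h2 : ∫⁻ y in A, μ.rnDeriv volume y ∂volume ≤ μ A :=
      Measure.setLIntegral_rnDeriv_le A
    have h3 : ∫⁻ y in A, ENNReal.ofReal ((g y) ^ 2) ∂volume
        = ∫⁻ y in A, μ.rnDeriv volume y ∂volume :=
      lintegral_congr_ae (ae_restrict_of_ae (hac.mono fun x hx => hx.symm))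
    rw [h3]
    exact le_antisymm (hA0 ▸ h2) (by simp)
  have hmeas : AEMeasurable (fun y => ENNReal.ofReal ((g y) ^ 2))
      ((volume : Measure ℝ).restrict A) :=
    ENNReal.measurable_ofReal.comp_aemeasurable ((hg.restrict).pow_const 2)
  have h4 : ∀ᵐ y ∂((volume : Measure ℝ).restrict A), ENNReal.ofReal ((g y) ^ 2) = 0 :=
    (lintegral_eq_zero_iff' hmeas).mp h1
  refine h4.mono fun y hy => ?_
  have h5 : (g y) ^ 2 ≤ 0 := ENNReal.ofReal_eq_zero.mp hy
  have h6 : (g y) ^ 2 = 0 := le_antisymm h5 (sq_nonneg _)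
  exact pow_eq_zero_iff two_ne_zero |>.mp h6

end EulerianAux

open EulerianAux

theorem eulerian_determined_by_pseudo_inverse
    (u₁ u₂ : ℝ → ℝ)
    (hu₁b : ∃ M, ∀ x, |u₁ x| ≤ M) (hu₂b : ∃ M, ∀ x, |u₂ x| ≤ M)
    (g₁ g₂ : ℝ → ℝ)
    (hg₁ : MemLp g₁ 2 (volume : Measure ℝ))
    (hg₂ : MemLp g₂ 2 (volume : Measure ℝ))
    (hAC₁ : ∀ x : ℝ, u₁ x = u₁ 0 + ∫ y in (0:ℝ)..x, g₁ y)
    (hAC₂ : ∀ x : ℝ, u₂ x = u₂ 0 + ∫ y in (0:ℝ)..x, g₂ y)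
    (μ₁ μ₂ : Measure ℝ) [IsFiniteMeasure μ₁] [IsFiniteMeasure μ₂]
    (hacpart₁ : μ₁.rnDeriv volume =ᵐ[volume] fun x => ENNReal.ofReal ((g₁ x) ^ 2))
    (hacpart₂ : μ₂.rnDeriv volume =ᵐ[volume] fun x => ENNReal.ofReal ((g₂ x) ^ 2))
    (C : ℝ) (hC : C = (μ₁ univ).toReal) (hC' : μ₁ univ = μ₂ univ) (hCpos : 0 < C)
    (χ₁ χ₂ : ℝ → ℝ)
    (hχ₁ : ∀ η ∈ Ioo 0 C, χ₁ η = sSup {x : ℝ | (μ₁ (Iio x)).toReal < η})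
    (hχ₂ : ∀ η ∈ Ioo 0 C, χ₂ η = sSup {x : ℝ | (μ₂ (Iio x)).toReal < η})
    (heq : ∀ η ∈ Ioo 0 C, χ₁ η = χ₂ η ∧ u₁ (χ₁ η) = u₂ (χ₂ η)) :
    μ₁ = μ₂ ∧ u₁ = u₂ := by
  have hC₂ : C = (μ₂ univ).toReal := by rw [hC, hC']
  -- Step 1 : μ₁ = μ₂
  have key12 : ∀ x η, η ∈ Ioo 0 C → (μ₁ (Iio x)).toReal < η → (μ₂ (Iio x)).toReal ≤ η := by
    intro x η hmem hx
    have hxχ : x ≤ χ₂ η := by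
      rw [← (heq η hmem).1, hχ₁ η hmem]
      exact le_chi μ₁ (hC ▸ hmem.2) hx
    refine F_le_of_forall_lt μ₂ fun y hy => ?_
    have hyχ : y < χ₂ η := lt_of_lt_of_le hy hxχ
    rw [hχ₂ η hmem] at hyχ
    exact F_lt_of_lt_chi μ₂ hmem.1 hyχ
  have key21 : ∀ x η, η ∈ Ioo 0 C → (μ₂ (Iio x)).toReal < η → (μ₁ (Iio x)).toReal ≤ η := by
    intro x η hmem hx
    have hxχ : x ≤ χ₁ η := by
      rw [(heq η hmem).1, hχ₂ η hmem]
      exact le_chi μ₂ (hC₂ ▸ hmem.2) hx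
    refine F_le_of_forall_lt μ₁ fun y hy => ?_
    have hyχ : y < χ₁ η := lt_of_lt_of_le hy hxχ
    rw [hχ₁ η hmem] at hyχ
    exact F_lt_of_lt_chi μ₁ hmem.1 hyχ
  have hFeq : ∀ x, μ₁ (Iio x) = μ₂ (Iio x) := by
    intro x
    have h12 : (μ₂ (Iio x)).toReal ≤ (μ₁ (Iio x)).toReal := by
      by_contra h
      push_neg at h
      set η := ((μ₁ (Iio x)).toReal + (μ₂ (Iio x)).toReal) / 2 with hηdef
      have hη1 : (μ₁ (Iio x)).toReal < η := by simp only [hηdef]; linarith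
      have hη2 : η < (μ₂ (Iio x)).toReal := by simp only [hηdef]; linarith
      have hmem : η ∈ Ioo 0 C :=
        ⟨lt_of_le_of_lt ENNReal.toReal_nonneg hη1,
         lt_of_lt_of_le hη2 (hC₂ ▸ F_le_univ μ₂ x)⟩
      exact absurd (key12 x η hmem hη1) (not_le.mpr hη2)
    have h21 : (μ₁ (Iio x)).toReal ≤ (μ₂ (Iio x)).toReal := by
      by_contra h
      push_neg at h
      set η := ((μ₂ (Iio x)).toReal + (μ₁ (Iio x)).toReal) / 2 with hηdef
      have hη1 : (μ₂ (Iio x)).toReal < η := by simp only [hηdef]; linarith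
      have hη2 : η < (μ₁ (Iio x)).toReal := by simp only [hηdef]; linarith
      have hmem : η ∈ Ioo 0 C :=
        ⟨lt_of_le_of_lt ENNReal.toReal_nonneg hη1,
         lt_of_lt_of_le hη2 (hC ▸ F_le_univ μ₁ x)⟩
      exact absurd (key21 x η hmem hη1) (not_le.mpr hη2)
    have := le_antisymm h21 h12
    exact (ENNReal.toReal_eq_toReal_iff' (measure_ne_top μ₁ _) (measure_ne_top μ₂ _)).mp this
  have hμeq : μ₁ = μ₂ := by
    refine Measure.ext_of_Ico μ₁ μ₂ fun {a b} hab => ?_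
    rw [show Ico a b = Iio b \ Iio a by ext; simp [and_comm],
      measure_diff (Iio_subset_Iio hab.le) measurableSet_Iio.nullMeasurableSet
        (measure_ne_top μ₁ _),
      measure_diff (Iio_subset_Iio hab.le) measurableSet_Iio.nullMeasurableSet
        (measure_ne_top μ₂ _), hFeq a, hFeq b]
  refine ⟨hμeq, ?_⟩
  -- Step 2 : u₁ = u₂
  have hint : ∀ (g : ℝ → ℝ), MemLp g 2 (volume : Measure ℝ) →
      ∀ a b : ℝ, IntervalIntegrable g volume a b := by
    intro g hg a b
    rw [intervalIntegrable_iff]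
    have h1 : MemLp g 2 ((volume : Measure ℝ).restrict (uIoc a b)) := hg.restrict _
    haveI : IsFiniteMeasure ((volume : Measure ℝ).restrict (uIoc a b)) :=
      ⟨by rw [Measure.restrict_apply_univ]; exact measure_Ioc_lt_top⟩
    exact memLp_one_iff_integrable.mp (h1.mono_exponent (by norm_num))
  have hint₁ := hint g₁ hg₁
  have hint₂ := hint g₂ hg₂
  have hcont₁ : Continuous u₁ := by
    have h : u₁ = fun x => u₁ 0 + ∫ y in (0:ℝ)..x, g₁ y := funext hAC₁
    rw [h]
    exact continuous_const.add (intervalIntegral.continuous_primitive hint₁ 0)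
  have hcont₂ : Continuous u₂ := by
    have h : u₂ = fun x => u₂ 0 + ∫ y in (0:ℝ)..x, g₂ y := funext hAC₂
    rw [h]
    exact continuous_const.add (intervalIntegral.continuous_primitive hint₂ 0)
  set S : Set ℝ := χ₁ '' (Ioo 0 C) with hSdef
  have hSne : S.Nonempty := ⟨χ₁ (C/2), ⟨C/2, ⟨half_pos hCpos, half_lt_self hCpos⟩, rfl⟩⟩
  have hnull : ∀ a b : ℝ, (∀ s ∈ S, s ∉ Ioo a b) → μ₁ (Ioo a b) = 0 := by
    intro a b hab
    rcases le_or_gt b a with h | h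
    · rw [Ioo_eq_empty (not_lt.mpr h), measure_empty]
    have step : ∀ c d : ℝ, a < c → d < b → μ₁ (Ico c d) = 0 := by
      intro c d hac hdb
      rcases le_or_gt d c with hdc | hcd
      · rw [Ico_eq_empty (not_lt.mpr hdc), measure_empty]
      have hF : (μ₁ (Iio d)).toReal ≤ (μ₁ (Iio c)).toReal := by
        by_contra hlt
        push_neg at hlt
        set η := ((μ₁ (Iio c)).toReal + (μ₁ (Iio d)).toReal) / 2 with hηdef
        have hη1 : (μ₁ (Iio c)).toReal < η := by simp only [hηdef]; linarith
        have hη2 : η < (μ₁ (Iio d)).toReal := by simp only [hηdef]; linarith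
        have hmem : η ∈ Ioo 0 C :=
          ⟨lt_of_le_of_lt ENNReal.toReal_nonneg hη1,
           lt_of_lt_of_le hη2 (hC ▸ F_le_univ μ₁ d)⟩
        have hcχ : c ≤ χ₁ η := by
          rw [hχ₁ η hmem]; exact le_chi μ₁ (hC ▸ hmem.2) hη1
        have hχd : χ₁ η ≤ d := by
          by_contra hh
          push_neg at hh
          rw [hχ₁ η hmem] at hh
          exact absurd (F_lt_of_lt_chi μ₁ hmem.1 hh) (not_lt.mpr hη2.le)
        exact hab (χ₁ η) ⟨η, hmem, rfl⟩ ⟨lt_of_lt_of_le hac hcχ, lt_of_le_of_lt hχd hdb⟩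
      have hle : μ₁ (Iio d) ≤ μ₁ (Iio c) :=
        (ENNReal.toReal_le_toReal (measure_ne_top μ₁ _) (measure_ne_top μ₁ _)).mp hF
      rw [show Ico c d = Iio d \ Iio c by ext; simp [and_comm],
        measure_diff (Iio_subset_Iio hcd.le) measurableSet_Iio.nullMeasurableSet
          (measure_ne_top μ₁ _)]
      exact tsub_eq_zero_of_le hle
    have hcover : Ioo a b
        = ⋃ n : ℕ, Ico (a + (b - a) / ((n : ℝ) + 2)) (b - (b - a) / ((n : ℝ) + 2)) := by
      ext y
      simp only [mem_iUnion, mem_Ioo, mem_Ico]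
      constructor
      · rintro ⟨hay, hyb⟩
        set m := min (y - a) (b - y) with hm
        have hm0 : 0 < m := lt_min (by linarith) (by linarith)
        obtain ⟨n, hn⟩ := exists_nat_gt ((b - a) / m)
        have hε : (b - a) / ((n : ℝ) + 2) < m := by
          rw [div_lt_iff₀ (by positivity)]
          have h2 : b - a < ((n : ℝ) + 2) * m :=
            (div_lt_iff₀ hm0).mp (by linarith)
          linarith [h2, mul_comm ((n : ℝ) + 2) m]
        refine ⟨n, ?_, ?_⟩
        · linarith [min_le_left (y - a) (b - y)]
        · linarith [min_le_right (y - a) (b - y)]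
      · rintro ⟨n, h1, h2⟩
        have hε : 0 < (b - a) / ((n : ℝ) + 2) := div_pos (by linarith) (by positivity)
        exact ⟨by linarith, by linarith⟩
    rw [hcover]
    refine measure_iUnion_null fun n => ?_
    have hε : 0 < (b - a) / ((n : ℝ) + 2) := div_pos (by linarith) (by positivity)
    exact step _ _ (by linarith) (by linarith)
  have hkey : ∀ (u g : ℝ → ℝ), (∀ x, u x = u 0 + ∫ y in (0:ℝ)..x, g y) →
      (∀ a b : ℝ, IntervalIntegrable g volume a b) →
      ∀ a b : ℝ, a ≤ b → (∀ᵐ y ∂((volume : Measure ℝ).restrict (Ioo a b)), g y = 0) →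
      u b = u a := by
    intro u g hACu hintu a b hab hg0
    have hsub : u b - u a = ∫ y in a..b, g y := by
      rw [hACu a, hACu b]
      have h3 := intervalIntegral.integral_interval_sub_left (hintu 0 b) (hintu 0 a)
      linarith [h3]
    have hzero : ∫ y in a..b, g y = 0 := by
      rw [intervalIntegral.integral_of_le hab, ← Measure.restrict_congr_set Ioo_ae_eq_Ioc]
      exact integral_eq_zero_of_ae hg0
    linarith
  have hg₁m : AEMeasurable g₁ (volume : Measure ℝ) := hg₁.aestronglyMeasurable.aemeasurable
  have hg₂m : AEMeasurable g₂ (volume : Measure ℝ) := hg₂.aestronglyMeasurable.aemeasurable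
  have huIoo : ∀ a b : ℝ, a ≤ b → μ₁ (Ioo a b) = 0 → u₁ b = u₁ a ∧ u₂ b = u₂ a := by
    intro a b hab h0
    constructor
    · exact hkey u₁ g₁ hAC₁ hint₁ a b hab
        (g_ae_zero μ₁ g₁ hg₁m hacpart₁ measurableSet_Ioo h0)
    · exact hkey u₂ g₂ hAC₂ hint₂ a b hab
        (g_ae_zero μ₂ g₂ hg₂m hacpart₂ measurableSet_Ioo (hμeq ▸ h0))
  have hSc : ∀ s ∈ closure S, u₁ s = u₂ s := by
    have hsub : S ⊆ {y | u₁ y = u₂ y} := by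
      rintro s ⟨η, hη, rfl⟩
      have h := (heq η hη).2
      rw [← (heq η hη).1] at h
      exact h
    exact fun s hs => closure_minimal hsub (isClosed_eq hcont₁ hcont₂) hs
  funext x
  rcases (S ∩ Iic x).eq_empty_or_nonempty with hE | hne
  · have hlb : ∀ s ∈ S, x ≤ s := by
      intro s hs
      by_contra hh
      push_neg at hh
      have : s ∈ (∅ : Set ℝ) := hE ▸ (⟨hs, hh.le⟩ : s ∈ S ∩ Iic x)
      exact this
    have hxb : x ≤ sInf S := le_csInf hSne hlb
    have hbc : sInf S ∈ closure S := csInf_mem_closure hSne ⟨x, hlb⟩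
    have h0 : μ₁ (Ioo x (sInf S)) = 0 := by
      apply hnull
      intro s hs hmem
      exact absurd (csInf_le ⟨x, hlb⟩ hs) (not_le.mpr hmem.2)
    obtain ⟨h1, h2⟩ := huIoo x (sInf S) hxb h0
    calc u₁ x = u₁ (sInf S) := h1.symm
      _ = u₂ (sInf S) := hSc _ hbc
      _ = u₂ x := h2
  · have hub : ∀ s ∈ S ∩ Iic x, s ≤ x := fun s hs => hs.2
    have hax : sSup (S ∩ Iic x) ≤ x := csSup_le hne hub
    have hac : sSup (S ∩ Iic x) ∈ closure S :=
      closure_mono inter_subset_left (csSup_mem_closure hne ⟨x, hub⟩)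
    have h0 : μ₁ (Ioo (sSup (S ∩ Iic x)) x) = 0 := by
      apply hnull
      intro s hs hmem
      have hmem2 : s ∈ S ∩ Iic x := ⟨hs, hmem.2.le⟩
      exact absurd (le_csSup ⟨x, hub⟩ hmem2) (not_le.mpr hmem.1)
    obtain ⟨h1, h2⟩ := huIoo (sSup (S ∩ Iic x)) x hax h0
    calc u₁ x = u₁ (sSup (S ∩ Iic x)) := h1
      _ = u₂ (sSup (S ∩ Iic x)) := hSc _ hac
      _ = u₂ x := h2.symm
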